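/- For any u ∈ H with w = P_W u, the element u*(w) - v*(w) equals P_{V_n^⊥ ∩ W} u, the orthogonal projection of u onto V_n^⊥ ∩ W; consequently P_{V_n} u + (u*(w) - v*(w)) = P_{V_n ⊕ (V_n^⊥ ∩ W)} u. -/

import Mathlib

open RealInnerProductSpace

/-- For any `u ∈ H` with `w = P_W u`, the element `u*(w) - v*(w)` equals
`P_{V_n^⊥ ∩ W} u`; consequently `P_{V_n} u + (u*(w) - v*(w)) = P_{V_n ⊕ (V_n^⊥ ∩ W)} u`. -/
theorem stmt13 {H : Type*} [NormedAddCommGroup H] [InnerProductSpace ℝ H] [CompleteSpace H]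
    (Vn W : Submodule ℝ H) [FiniteDimensional ℝ Vn] [Submodule.HasOrthogonalProjection W]
    [Submodule.HasOrthogonalProjection (Vnᗮ ⊓ W : Submodule ℝ H)]
    [Submodule.HasOrthogonalProjection (Vn ⊔ (Vnᗮ ⊓ W) : Submodule ℝ H)]
    (hβ : ∃ β > (0 : ℝ), ∀ v ∈ Vn, β * ‖v‖ ≤ ‖(Submodule.orthogonalProjectionOnto W v : H)‖)
    (u ustar vstar : H)
    (hu : (Submodule.orthogonalProjectionOnto W ustar : H) = (Submodule.orthogonalProjectionOnto W u : H))
    (hv : vstar ∈ Vn)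
    (hmin : ∀ u' v' : H,
      (Submodule.orthogonalProjectionOnto W u' : H) = (Submodule.orthogonalProjectionOnto W u : H) → v' ∈ Vn →
        ‖ustar - vstar‖ ≤ ‖u' - v'‖) :
    ustar - vstar = (Submodule.orthogonalProjectionOnto (Vnᗮ ⊓ W : Submodule ℝ H) u : H) ∧
      (Submodule.orthogonalProjectionOnto Vn u : H) + (ustar - vstar) =
        (Submodule.orthogonalProjectionOnto (Vn ⊔ (Vnᗮ ⊓ W) : Submodule ℝ H) u : H) := by
  set d := ustar - vstar with hd
  -- u - ustar ∈ Wᗮ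
  have huW : u - ustar ∈ Wᗮ := by
    have h1 := Submodule.sub_starProjection_mem_orthogonal (K := W) u
    have h2 := Submodule.sub_starProjection_mem_orthogonal (K := W) ustar
    have heq : u - ustar =
        (u - Submodule.orthogonalProjectionOnto W u) - (ustar - Submodule.orthogonalProjectionOnto W ustar) := by
      rw [hu]; abel
    rw [heq]; exact Wᗮ.sub_mem h1 h2
  -- d ⊥ Vn
  have hdV : ∀ w ∈ Vn, ⟪d, w⟫ = 0 := by
    have hmin' : ∀ w ∈ Vn, ‖d‖ ≤ ‖d - w‖ := by
      intro w hw
      have := hmin ustar (vstar + w) hu (Vn.add_mem hv hw)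
      simpa [hd, sub_add_eq_sub_sub] using this
    have hinf : ‖d - (0 : H)‖ = ⨅ w : Vn, ‖d - w‖ := by
      apply le_antisymm
      · apply le_ciInf
        intro w
        simpa using hmin' w w.2
      · have hbdd : BddBelow (Set.range fun w : Vn => ‖d - w‖) :=
          ⟨0, by rintro x ⟨w, rfl⟩; positivity⟩
        simpa using ciInf_le hbdd ⟨0, Vn.zero_mem⟩
    have := (Submodule.norm_eq_iInf_iff_real_inner_eq_zero Vn Vn.zero_mem).1 hinf
    intro w hw
    simpa using this w hw
  -- d ∈ W
  have hdW : d ∈ W := by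
    set p := (Submodule.orthogonalProjectionOnto W d : H) with hp
    have hperp : d - p ∈ Wᗮ := Submodule.sub_starProjection_mem_orthogonal d
    have hproj : (Submodule.orthogonalProjectionOnto W (ustar - (d - p)) : H) =
        (Submodule.orthogonalProjectionOnto W u : H) := by
      have hz : Submodule.orthogonalProjectionOnto W (d - p) = 0 :=
        Submodule.orthogonalProjectionOnto_apply_of_mem_orthogonal hperp
      rw [map_sub, hz]
      simpa using hu
    have hle : ‖d‖ ≤ ‖p‖ := by
      have := hmin (ustar - (d - p)) vstar hproj hv
      have heq : ustar - (d - p) - vstar = p := by rw [hd]; abel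
      rwa [heq] at this
    have hinner : ⟪p, d - p⟫ = 0 := hperp p (SetLike.coe_mem _)
    have hpyth : ‖d‖ ^ 2 = ‖p‖ ^ 2 + ‖d - p‖ ^ 2 := by
      have h := norm_add_sq_real p (d - p)
      have he : p + (d - p) = d := by abel
      rw [he, hinner] at h
      linarith
    have hz : ‖d - p‖ = 0 := by
      have h2 : ‖d‖ ^ 2 ≤ ‖p‖ ^ 2 := by
        have := norm_nonneg p
        nlinarith [norm_nonneg d]
      nlinarith [norm_nonneg (d - p)]
    have hdp : d = p := sub_eq_zero.1 (norm_eq_zero.1 hz)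
    rw [hdp]; exact SetLike.coe_mem _
  have hdVW : d ∈ (Vnᗮ ⊓ W : Submodule ℝ H) := by
    refine Submodule.mem_inf.2 ⟨?_, hdW⟩
    exact (Submodule.mem_orthogonal' _ _).2 hdV
  -- u - d ⊥ (Vnᗮ ⊓ W)
  have h3 : ∀ z ∈ (Vnᗮ ⊓ W : Submodule ℝ H), ⟪u - d, z⟫ = 0 := by
    intro z hz
    obtain ⟨hz1, hz2⟩ := hz
    have e1 : ⟪u - ustar, z⟫ = 0 := by
      rw [real_inner_comm]; exact (Submodule.mem_orthogonal _ _).1 huW z hz2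
    have e2 : ⟪vstar, z⟫ = 0 := (Submodule.mem_orthogonal _ _).1 hz1 vstar hv
    have : u - d = (u - ustar) + vstar := by rw [hd]; abel
    rw [this, inner_add_left, e1, e2, add_zero]
  have hfirst : ustar - vstar = (Submodule.orthogonalProjectionOnto (Vnᗮ ⊓ W : Submodule ℝ H) u : H) :=
    (Submodule.eq_starProjection_of_mem_of_inner_eq_zero hdVW h3).symm
  refine ⟨hfirst, ?_⟩
  have hPV := Submodule.sub_starProjection_mem_orthogonal (K := Vn) u
  refine (Submodule.eq_starProjection_of_mem_of_inner_eq_zero ?_ ?_).symm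
  · exact Submodule.add_mem _
      (Submodule.mem_sup_left (SetLike.coe_mem _))
      (Submodule.mem_sup_right hdVW)
  · intro w hw
    obtain ⟨a, ha, b, hb, rfl⟩ := Submodule.mem_sup.1 hw
    have e1 : ⟪u - ((Submodule.orthogonalProjectionOnto Vn u : H) + d), a⟫ = 0 := by
      have h1 : ⟪u - (Submodule.orthogonalProjectionOnto Vn u : H), a⟫ = 0 := by
        rw [real_inner_comm]; exact (Submodule.mem_orthogonal _ _).1 hPV a ha
      have h2 : ⟪d, a⟫ = 0 := hdV a ha
      have : u - ((Submodule.orthogonalProjectionOnto Vn u : H) + d) =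
          (u - (Submodule.orthogonalProjectionOnto Vn u : H)) - d := by abel
      rw [this, inner_sub_left, h1, h2, sub_zero]
    have e2 : ⟪u - ((Submodule.orthogonalProjectionOnto Vn u : H) + d), b⟫ = 0 := by
      have h1 : ⟪u - d, b⟫ = 0 := h3 b hb
      have h2 : ⟪(Submodule.orthogonalProjectionOnto Vn u : H), b⟫ = 0 :=
        (Submodule.mem_orthogonal _ _).1 hb.1 _ (SetLike.coe_mem _)
      have : u - ((Submodule.orthogonalProjectionOnto Vn u : H) + d) =
          (u - d) - (Submodule.orthogonalProjectionOnto Vn u : H) := by abel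
      rw [this, inner_sub_left, h1, h2, sub_zero]
    rw [inner_add_right, e1, e2, add_zero]
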